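/- arXiv:1905.03862 — 8 statements merged into one kernel-verified Lean document; each statement's English description precedes it below -/
import Mathlib

section
/- Let R>0, c2>0, γ>0, k≥1, β∈(-1,0], and define u(r) = (c2(1+γ)/k · (R/(β+1)·(R-r)^{β+1} - 1/(β+2)·(R-r)^{β+2}))^{1/(1+γ)} for r∈[0,R). Then u satisfies the ODE k·u'(r)/r + c2·(R-r)^β·u(r)^{-γ} = 0 for all r∈(0,R), with u'(0)=0 and u(r)→0 as r→R⁻. -/
open Set Filter Topology

theorem stmt0 (R c2 γ β : ℝ) (k : ℕ)
    (hR : 0 < R) (hc2 : 0 < c2) (hγ : 0 < γ) (hk : 1 ≤ k)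
    (hβ1 : -1 < β) (hβ2 : β ≤ 0)
    (u : ℝ → ℝ)
    (hu : ∀ r, u r =
      (c2 * (1 + γ) / k *
        (R / (β + 1) * (R - r) ^ (β + 1) - 1 / (β + 2) * (R - r) ^ (β + 2))) ^ (1 / (1 + γ))) :
    (∀ r ∈ Set.Ioo (0 : ℝ) R,
        (k : ℝ) * deriv u r / r + c2 * (R - r) ^ β * (u r) ^ (-γ) = 0) ∧
      deriv u 0 = 0 ∧
      Tendsto u (𝓝[<] R) (𝓝 0) := by
  have hk0 : (0:ℝ) < (k:ℝ) := by exact_mod_cast Nat.lt_of_lt_of_le Nat.zero_lt_one hk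
  have hγ1 : (0:ℝ) < 1 + γ := by linarith
  have hb1 : (0:ℝ) < β + 1 := by linarith
  have hb2 : (0:ℝ) < β + 2 := by linarith
  set C : ℝ := c2 * (1 + γ) / k with hCdef
  have hC : 0 < C := by positivity
  set e : ℝ := 1 / (1 + γ) with hedef
  have he : 0 < e := by positivity
  set v : ℝ → ℝ := fun r =>
    C * (R / (β + 1) * (R - r) ^ (β + 1) - 1 / (β + 2) * (R - r) ^ (β + 2)) with hvdef
  have huv : ∀ r, u r = v r ^ e := fun r => hu r
  -- positivity of v on [0, R)
  have hvpos : ∀ r, 0 ≤ r → r < R → 0 < v r := by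
    intro r hr0 hrR
    have hA : 0 < R - r := by linarith
    have hAR : R - r ≤ R := by linarith
    have h1 : (R - r) ^ (β + 2) = (R - r) ^ (β + 1) * (R - r) := by
      rw [show β + 2 = (β + 1) + 1 by ring, Real.rpow_add_one (ne_of_gt hA)]
    have hApow : 0 < (R - r) ^ (β + 1) := Real.rpow_pos_of_pos hA _
    have key : R / (β + 1) * (R - r) ^ (β + 1) - 1 / (β + 2) * (R - r) ^ (β + 2)
        = (R - r) ^ (β + 1) * (R / (β + 1) - (R - r) / (β + 2)) := by
      rw [h1]; ring
    have h2 : (R - r) / (β + 2) < R / (β + 1) := by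
      have : (R - r) / (β + 2) < R - r := by
        rw [div_lt_iff₀ hb2]
        nlinarith
      have h3 : R ≤ R / (β + 1) := by
        rw [le_div_iff₀ hb1]
        nlinarith
      linarith
    rw [hvdef]
    have : 0 < R / (β + 1) - (R - r) / (β + 2) := by linarith
    simp only []
    rw [key]
    positivity
  -- derivative of v
  have hvd : ∀ r, r < R → HasDerivAt v (-(C * r * (R - r) ^ β)) r := by
    intro r hrR
    have hA : 0 < R - r := by linarith
    have h1 : HasDerivAt (fun x : ℝ => R - x) (-1) r := by
      simpa using (hasDerivAt_id r).const_sub R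
    have h2 : HasDerivAt (fun x : ℝ => (R - x) ^ (β + 1)) (-1 * (β + 1) * (R - r) ^ β) r := by
      have := h1.rpow_const (p := β + 1) (Or.inl (ne_of_gt hA))
      simpa using this
    have h3 : HasDerivAt (fun x : ℝ => (R - x) ^ (β + 2)) (-1 * (β + 2) * (R - r) ^ (β + 1)) r := by
      have := h1.rpow_const (p := β + 2) (Or.inl (ne_of_gt hA))
      have h32 : β + 2 - 1 = β + 1 := by ring
      rw [h32] at this
      exact this
    have h4 := ((h2.const_mul (R / (β + 1))).sub (h3.const_mul (1 / (β + 2)))).const_mul C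
    have heq : C * (R / (β + 1) * (-1 * (β + 1) * (R - r) ^ β) -
        1 / (β + 2) * (-1 * (β + 2) * (R - r) ^ (β + 1))) = -(C * r * (R - r) ^ β) := by
      rw [Real.rpow_add_one (ne_of_gt hA)]
      field_simp
      ring
    rw [heq] at h4
    exact h4
  -- derivative of u
  have hud : ∀ r, 0 ≤ r → r < R →
      HasDerivAt u (-(C * r * (R - r) ^ β) * e * v r ^ (e - 1)) r := by
    intro r hr0 hrR
    have := (hvd r hrR).rpow_const (p := e) (Or.inl (ne_of_gt (hvpos r hr0 hrR)))
    have huu : u = fun r => v r ^ e := funext huv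
    rw [huu]
    exact this
  refine ⟨?_, ?_, ?_⟩
  · intro r hr
    obtain ⟨hr0, hrR⟩ := hr
    have hA : 0 < R - r := by linarith
    rw [(hud r (le_of_lt hr0) hrR).deriv, huv r]
    have hvp := hvpos r (le_of_lt hr0) hrR
    have h5 : (v r ^ e) ^ (-γ) = v r ^ (e - 1) := by
      rw [← Real.rpow_mul (le_of_lt hvp)]
      congr 1
      rw [hedef]
      field_simp
      ring
    rw [h5]
    have hkCe : (k:ℝ) * C * e = c2 := by
      rw [hCdef, hedef]
      field_simp
    have hr0' : r ≠ 0 := ne_of_gt hr0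
    rw [← hkCe]
    field_simp
    ring
  · rw [(hud 0 le_rfl hR).deriv]
    simp
  · -- tendsto
    have h1 : Tendsto (fun r : ℝ => R - r) (𝓝[<] R) (𝓝 0) := by
      have : Tendsto (fun r : ℝ => R - r) (𝓝 R) (𝓝 (R - R)) :=
        (continuous_const.sub continuous_id).tendsto R
      simpa using this.mono_left nhdsWithin_le_nhds
    have hp1 : Tendsto (fun r : ℝ => (R - r) ^ (β + 1)) (𝓝[<] R) (𝓝 0) := by
      have hc := (Real.continuousAt_rpow_const 0 (β + 1) (Or.inr (le_of_lt hb1))).tendsto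
      have := hc.comp h1
      simpa [Real.zero_rpow (ne_of_gt hb1), Function.comp_def] using this
    have hp2 : Tendsto (fun r : ℝ => (R - r) ^ (β + 2)) (𝓝[<] R) (𝓝 0) := by
      have hc := (Real.continuousAt_rpow_const 0 (β + 2) (Or.inr (le_of_lt hb2))).tendsto
      have := hc.comp h1
      simpa [Real.zero_rpow (ne_of_gt hb2), Function.comp_def] using this
    have hv0 : Tendsto v (𝓝[<] R) (𝓝 0) := by
      have := ((hp1.const_mul (R / (β + 1))).sub (hp2.const_mul (1 / (β + 2)))).const_mul C
      simpa [hvdef, mul_comm] using this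
    have hc := (Real.continuousAt_rpow_const 0 e (Or.inr (le_of_lt he))).tendsto
    have hfin := hc.comp hv0
    have huu : u = fun r => v r ^ e := funext huv
    rw [huu]
    simpa [Real.zero_rpow (ne_of_gt he), Function.comp_def] using hfin
end

section
/- Let R>0, c2>0, γ>0, k≥1, β∈(-1,0], and let u(r) = (c2(1+γ)/k · (R/(β+1)·(R-r)^{β+1} - 1/(β+2)·(R-r)^{β+2}))^{1/(1+γ)}. Then u'(r)≤0 and u(r)>0 for all r∈[0,R), and u''(r) ≤ u'(r)/r for all r∈(0,R). -/
open Set Filter Topology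

theorem stmt1 (R c2 γ β : ℝ) (k : ℕ)
    (hR : 0 < R) (hc2 : 0 < c2) (hγ : 0 < γ) (hk : 1 ≤ k)
    (hβ1 : -1 < β) (hβ2 : β ≤ 0)
    (u : ℝ → ℝ)
    (hu : ∀ r, u r =
      (c2 * (1 + γ) / k *
        (R / (β + 1) * (R - r) ^ (β + 1) - 1 / (β + 2) * (R - r) ^ (β + 2))) ^ (1 / (1 + γ))) :
    (∀ r ∈ Set.Ico (0 : ℝ) R, deriv u r ≤ 0 ∧ 0 < u r) ∧
      ∀ r ∈ Set.Ioo (0 : ℝ) R, deriv (deriv u) r ≤ deriv u r / r := by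
  have hk0 : (0:ℝ) < k := by exact_mod_cast Nat.lt_of_lt_of_le Nat.zero_lt_one hk
  have h1γ : 0 < 1 + γ := by linarith
  have ha : 0 < β + 1 := by linarith
  have hb : 0 < β + 2 := by linarith
  set C := c2 * (1 + γ) / (k:ℝ) with hCdef
  have hC : 0 < C := by rw [hCdef]; positivity
  set p := 1 / (1 + γ) with hpdef
  have hp : 0 < p := by rw [hpdef]; positivity
  have hp1 : p < 1 := by rw [hpdef, div_lt_one h1γ]; linarith
  set g : ℝ → ℝ := fun r => R / (β + 1) * (R - r) ^ (β + 1) - 1 / (β + 2) * (R - r) ^ (β + 2)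
    with hgdef
  have hufun : u = fun r => (C * g r) ^ p := by
    funext r; rw [hu r]
  subst hufun
  -- positivity of g
  have hgpos : ∀ r : ℝ, 0 ≤ r → r < R → 0 < g r := by
    intro r h0 hr
    have hRr : 0 < R - r := by linarith
    have h2 : (R - r) ^ (β + 2) = (R - r) ^ (β + 1) * (R - r) := by
      rw [show β + 2 = β + 1 + 1 by ring, Real.rpow_add_one (ne_of_gt hRr)]
    have hgr : g r = (R - r) ^ (β + 1) * (R / (β + 1) - (R - r) / (β + 2)) := by
      rw [hgdef]; simp only []; rw [h2]; field_simp
    rw [hgr]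
    have hx1 : (R - r) / (β + 2) ≤ R / (β + 2) := by
      gcongr; linarith
    have hx2 : R / (β + 2) < R / (β + 1) := by
      apply div_lt_div_of_pos_left hR ha; linarith
    have := Real.rpow_pos_of_pos hRr (β + 1)
    nlinarith
  -- derivative of g
  have hgd : ∀ r : ℝ, r < R → HasDerivAt g (-(r * (R - r) ^ β)) r := by
    intro r hr
    have hRr : 0 < R - r := by linarith
    have hne : R - r ≠ 0 := ne_of_gt hRr
    have hf : HasDerivAt (fun s : ℝ => R - s) (-1) r := (hasDerivAt_id r).const_sub R
    have h1 := (hf.rpow_const (p := β + 1) (Or.inl hne)).const_mul (R / (β + 1))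
    have h2 := (hf.rpow_const (p := β + 2) (Or.inl hne)).const_mul (1 / (β + 2))
    have hd : HasDerivAt (fun y => R / (β + 1) * (R - y) ^ (β + 1) - 1 / (β + 2) * (R - y) ^ (β + 2)) _ r :=
      h1.sub h2
    convert hd using 1
    have e1 : β + 1 - 1 = β := by ring
    have e2 : β + 2 - 1 = β + 1 := by ring
    rw [e1, e2, Real.rpow_add_one hne]
    field_simp
    ring
  -- derivative of u
  have hud : ∀ r : ℝ, 0 ≤ r → r < R →
      HasDerivAt (fun s => (C * g s) ^ p)
        (C * -(r * (R - r) ^ β) * p * (C * g r) ^ (p - 1)) r := by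
    intro r h0 hr
    exact ((hgd r hr).const_mul C).rpow_const
      (Or.inl (ne_of_gt (mul_pos hC (hgpos r h0 hr))))
  constructor
  · intro r hr
    obtain ⟨h0, hrR⟩ := hr
    have hg := hgpos r h0 hrR
    have hRr : 0 < R - r := by linarith
    refine ⟨?_, Real.rpow_pos_of_pos (mul_pos hC hg) p⟩
    rw [(hud r h0 hrR).deriv]
    have hX : 0 ≤ r * (R - r) ^ β := mul_nonneg h0 (Real.rpow_pos_of_pos hRr β).le
    have hY : 0 < (C * g r) ^ (p - 1) := Real.rpow_pos_of_pos (mul_pos hC hg) (p - 1)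
    have h1 : C * -(r * (R - r) ^ β) * p ≤ 0 := by
      nlinarith [mul_nonneg (mul_nonneg hC.le hX) hp.le]
    exact mul_nonpos_of_nonpos_of_nonneg h1 hY.le
  · intro r hr
    obtain ⟨h0, hrR⟩ := hr
    have hRr : 0 < R - r := by linarith
    have hne : R - r ≠ 0 := ne_of_gt hRr
    have hg := hgpos r h0.le hrR
    have hCg : C * g r ≠ 0 := ne_of_gt (mul_pos hC hg)
    -- deriv u agrees with the explicit formula near r
    have hev : deriv (fun s => (C * g s) ^ p) =ᶠ[𝓝 r]
        fun s => C * -(s * (R - s) ^ β) * p * (C * g s) ^ (p - 1) := by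
      filter_upwards [Ioo_mem_nhds h0 hrR] with s hs
      exact (hud s hs.1.le hs.2).deriv
    rw [hev.deriv_eq]
    -- derivative of the formula
    have hf : HasDerivAt (fun s : ℝ => R - s) (-1) r := (hasDerivAt_id r).const_sub R
    have hA : HasDerivAt (fun s : ℝ => s * (R - s) ^ β)
        (1 * (R - r) ^ β + r * (-1 * β * (R - r) ^ (β - 1))) r :=
      (hasDerivAt_id r).mul (hf.rpow_const (p := β) (Or.inl hne))
    have h1 := (hA.neg.const_mul C).mul_const p
    have h2 := ((hgd r hrR).const_mul C).rpow_const (p := p - 1) (Or.inl hCg)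
    have hφ : HasDerivAt (fun s => C * -(s * (R - s) ^ β) * p * (C * g s) ^ (p - 1))
        (C * -(1 * (R - r) ^ β + r * (-1 * β * (R - r) ^ (β - 1))) * p * (C * g r) ^ (p - 1) +
          C * -(r * (R - r) ^ β) * p * (C * -(r * (R - r) ^ β) * (p - 1) * (C * g r) ^ (p - 1 - 1))) r :=
      h1.mul h2
    rw [hφ.deriv]
    have ep : p - 1 - 1 = p - 2 := by ring
    rw [ep]
    have hX : 0 < (R - r) ^ β := Real.rpow_pos_of_pos hRr β
    have hZ : 0 < (R - r) ^ (β - 1) := Real.rpow_pos_of_pos hRr (β - 1)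
    have hY1 : 0 < (C * g r) ^ (p - 1) := Real.rpow_pos_of_pos (mul_pos hC hg) (p - 1)
    have hY2 : 0 < (C * g r) ^ (p - 2) := Real.rpow_pos_of_pos (mul_pos hC hg) (p - 2)
    rw [(hud r h0.le hrR).deriv, le_div_iff₀ h0]
    have t1 : β * (C * p * (r * r) * ((R - r) ^ (β - 1) * (C * g r) ^ (p - 1))) ≤ 0 :=
      mul_nonpos_of_nonpos_of_nonneg hβ2 (by positivity)
    have t2 : (p - 1) * (C * r * (R - r) ^ β * (C * r * (R - r) ^ β) * p * r *
        (C * g r) ^ (p - 2)) ≤ 0 :=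
      mul_nonpos_of_nonpos_of_nonneg (by linarith) (by positivity)
    nlinarith [t1, t2]
end

section
/- Let R>0, c2>0, γ>0, k≥1, β∈(-1,0] and u(r) = (c2(1+γ)/k · (R/(β+1)·(R-r)^{β+1} - 1/(β+2)·(R-r)^{β+2}))^{1/(1+γ)}. Then there exists a constant C = C(k,γ,β,R,c2) such that |u(r₁)-u(r₂)| ≤ C·|r₁-r₂|^{(β+1)/(γ+1)} for all r₁,r₂ ∈ [0,R]. -/
private lemma my_add_rpow_le {a b p : ℝ} (ha : 0 ≤ a) (hb : 0 ≤ b) (hp : 0 ≤ p) (hp1 : p ≤ 1) :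
    (a + b) ^ p ≤ a ^ p + b ^ p := by
  have h := NNReal.rpow_add_le_add_rpow a.toNNReal b.toNNReal hp hp1
  have h2 := NNReal.coe_le_coe.2 h
  rwa [NNReal.coe_rpow, NNReal.coe_add, NNReal.coe_add, NNReal.coe_rpow, NNReal.coe_rpow,
    Real.coe_toNNReal a ha, Real.coe_toNNReal b hb] at h2

private lemma my_rpow_sub_le {a b p : ℝ} (hb : 0 ≤ b) (hba : b ≤ a) (hp : 0 ≤ p) (hp1 : p ≤ 1) :
    a ^ p - b ^ p ≤ (a - b) ^ p := by
  have h := my_add_rpow_le (sub_nonneg.2 hba) hb hp hp1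
  rw [sub_add_cancel] at h
  linarith

private lemma my_abs_rpow_sub_le {a b p : ℝ} (ha : 0 ≤ a) (hb : 0 ≤ b) (hp : 0 ≤ p) (hp1 : p ≤ 1) :
    |a ^ p - b ^ p| ≤ |a - b| ^ p := by
  rcases le_total b a with h | h
  · rw [abs_of_nonneg (sub_nonneg.2 (Real.rpow_le_rpow hb h hp)), abs_of_nonneg (sub_nonneg.2 h)]
    exact my_rpow_sub_le hb h hp hp1
  · rw [abs_sub_comm, abs_sub_comm a b,
      abs_of_nonneg (sub_nonneg.2 (Real.rpow_le_rpow ha h hp)), abs_of_nonneg (sub_nonneg.2 h)]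
    exact my_rpow_sub_le ha h hp hp1

theorem stmt5 (R c2 γ β : ℝ) (k : ℕ)
    (hR : 0 < R) (hc2 : 0 < c2) (hγ : 0 < γ) (hk : 1 ≤ k)
    (hβ1 : -1 < β) (hβ2 : β ≤ 0)
    (u : ℝ → ℝ)
    (hu : ∀ r, u r =
      (c2 * (1 + γ) / k *
        (R / (β + 1) * (R - r) ^ (β + 1) - 1 / (β + 2) * (R - r) ^ (β + 2))) ^ (1 / (1 + γ))) :
    ∃ C : ℝ, ∀ r₁ ∈ Set.Icc (0 : ℝ) R, ∀ r₂ ∈ Set.Icc (0 : ℝ) R,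
      |u r₁ - u r₂| ≤ C * |r₁ - r₂| ^ ((β + 1) / (γ + 1)) := by
  have hp0 : 0 < β + 1 := by linarith
  have hp1 : β + 1 ≤ 1 := by linarith
  have hb2 : 0 < β + 2 := by linarith
  have hq0 : 0 < 1 / (1 + γ) := by positivity
  have hq1 : 1 / (1 + γ) ≤ 1 := by
    rw [div_le_one (by linarith)]; linarith
  have hk' : (1 : ℝ) ≤ (k : ℝ) := by exact_mod_cast hk
  have hk0 : (0 : ℝ) < (k : ℝ) := by linarith
  have hA : 0 < c2 * (1 + γ) / k := by positivity
  set A : ℝ := c2 * (1 + γ) / k with hAdef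
  set g : ℝ → ℝ := fun r => R / (β + 1) * (R - r) ^ (β + 1) - 1 / (β + 2) * (R - r) ^ (β + 2)
    with hgdef
  set M : ℝ := R / (β + 1) + 2 * R / (β + 2) with hMdef
  have hM : 0 < M := by positivity
  have ht2 : ∀ t : ℝ, 0 ≤ t → t ^ (β + 2) = t ^ (β + 1) * t := by
    intro t ht
    rw [show β + 2 = (β + 1) + 1 by ring, Real.rpow_add' ht (by linarith), Real.rpow_one]
  -- nonnegativity of g on [0, R]
  have hgnn : ∀ r ∈ Set.Icc (0 : ℝ) R, 0 ≤ g r := by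
    intro r hr
    have ht0 : 0 ≤ R - r := by linarith [hr.2]
    have htR : R - r ≤ R := by linarith [hr.1]
    have hpow : 0 ≤ (R - r) ^ (β + 1) := Real.rpow_nonneg ht0 _
    have key : (R - r) / (β + 2) ≤ R / (β + 1) := by
      calc (R - r) / (β + 2) ≤ R / (β + 2) := by gcongr
        _ ≤ R / (β + 1) := by gcongr <;> linarith
    have h0 : 0 ≤ (R - r) ^ (β + 1) * (R / (β + 1) - (R - r) / (β + 2)) :=
      mul_nonneg hpow (by linarith)
    have heq : g r = (R - r) ^ (β + 1) * (R / (β + 1) - (R - r) / (β + 2)) := by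
      simp only [hgdef, ht2 _ ht0]; ring
    rw [heq]; exact h0
  -- Hölder bound on g
  have hg : ∀ r₁ ∈ Set.Icc (0 : ℝ) R, ∀ r₂ ∈ Set.Icc (0 : ℝ) R,
      |g r₁ - g r₂| ≤ M * |r₁ - r₂| ^ (β + 1) := by
    intro r₁ hr₁ r₂ hr₂
    set t₁ : ℝ := R - r₁
    set t₂ : ℝ := R - r₂
    have ht₁0 : 0 ≤ t₁ := by simp only [t₁]; linarith [hr₁.2]
    have ht₂0 : 0 ≤ t₂ := by simp only [t₂]; linarith [hr₂.2]
    have ht₁R : t₁ ≤ R := by simp only [t₁]; linarith [hr₁.1]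
    have ht₂R : t₂ ≤ R := by simp only [t₂]; linarith [hr₂.1]
    have hΔeq : |t₁ - t₂| = |r₁ - r₂| := by
      rw [show t₁ - t₂ = -(r₁ - r₂) by simp only [t₁, t₂]; ring, abs_neg]
    set Δ : ℝ := |r₁ - r₂| with hΔdef
    have hΔ0 : 0 ≤ Δ := abs_nonneg _
    have hΔR : Δ ≤ R := by
      rw [abs_le]; constructor <;> [linarith [hr₁.1, hr₂.2]; linarith [hr₁.2, hr₂.1]]
    set D : ℝ := Δ ^ (β + 1) with hDdef
    have hD0 : 0 ≤ D := Real.rpow_nonneg hΔ0 _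
    have hD1 : |t₁ ^ (β + 1) - t₂ ^ (β + 1)| ≤ D := by
      have := my_abs_rpow_sub_le ht₁0 ht₂0 hp0.le hp1
      rwa [hΔeq] at this
    -- Δ ≤ R^(1-(β+1)) * D
    have hΔle : Δ ≤ R ^ (1 - (β + 1)) * D := by
      rcases eq_or_lt_of_le hΔ0 with h0 | h0
      · rw [← h0]
        exact mul_nonneg (Real.rpow_nonneg hR.le _) hD0
      · have : Δ = Δ ^ (β + 1) * Δ ^ (1 - (β + 1)) := by
          rw [← Real.rpow_add h0, show β + 1 + (1 - (β + 1)) = 1 by ring, Real.rpow_one]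
        rw [this]
        calc Δ ^ (β + 1) * Δ ^ (1 - (β + 1)) ≤ Δ ^ (β + 1) * R ^ (1 - (β + 1)) := by
              exact mul_le_mul_of_nonneg_left
                (Real.rpow_le_rpow hΔ0 hΔR (by linarith)) hD0
          _ = R ^ (1 - (β + 1)) * D := by rw [hDdef]; ring
    have hRpD : R ^ (β + 1) * Δ ≤ R * D := by
      calc R ^ (β + 1) * Δ ≤ R ^ (β + 1) * (R ^ (1 - (β + 1)) * D) :=
            mul_le_mul_of_nonneg_left hΔle (Real.rpow_nonneg hR.le _)
        _ = (R ^ (β + 1) * R ^ (1 - (β + 1))) * D := by ring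
        _ = R * D := by
            rw [← Real.rpow_add hR, show β + 1 + (1 - (β + 1)) = 1 by ring, Real.rpow_one]
    have hD2 : |t₁ ^ (β + 2) - t₂ ^ (β + 2)| ≤ 2 * R * D := by
      have hsplit : t₁ ^ (β + 2) - t₂ ^ (β + 2)
          = t₁ ^ (β + 1) * (t₁ - t₂) + (t₁ ^ (β + 1) - t₂ ^ (β + 1)) * t₂ := by
        rw [ht2 _ ht₁0, ht2 _ ht₂0]; ring
      rw [hsplit]
      calc |t₁ ^ (β + 1) * (t₁ - t₂) + (t₁ ^ (β + 1) - t₂ ^ (β + 1)) * t₂|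
          ≤ |t₁ ^ (β + 1) * (t₁ - t₂)| + |(t₁ ^ (β + 1) - t₂ ^ (β + 1)) * t₂| := abs_add_le _ _
        _ = |t₁ ^ (β + 1)| * |t₁ - t₂| + |t₁ ^ (β + 1) - t₂ ^ (β + 1)| * |t₂| := by
            rw [abs_mul, abs_mul]
        _ ≤ R ^ (β + 1) * Δ + D * R := by
            rw [hΔeq, abs_of_nonneg (Real.rpow_nonneg ht₁0 _), abs_of_nonneg ht₂0]
            exact add_le_add
              (mul_le_mul (Real.rpow_le_rpow ht₁0 ht₁R hp0.le) le_rfl hΔ0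
                (Real.rpow_nonneg hR.le _))
              (mul_le_mul hD1 ht₂R ht₂0 hD0)
        _ ≤ R * D + D * R := by nlinarith [hRpD]
        _ = 2 * R * D := by ring
    have hgg : g r₁ - g r₂ = R / (β + 1) * (t₁ ^ (β + 1) - t₂ ^ (β + 1))
        - 1 / (β + 2) * (t₁ ^ (β + 2) - t₂ ^ (β + 2)) := by
      simp only [hgdef]; ring
    rw [hgg]
    calc |R / (β + 1) * (t₁ ^ (β + 1) - t₂ ^ (β + 1))
          - 1 / (β + 2) * (t₁ ^ (β + 2) - t₂ ^ (β + 2))|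
        ≤ |R / (β + 1) * (t₁ ^ (β + 1) - t₂ ^ (β + 1))|
          + |1 / (β + 2) * (t₁ ^ (β + 2) - t₂ ^ (β + 2))| := abs_sub _ _
      _ = R / (β + 1) * |t₁ ^ (β + 1) - t₂ ^ (β + 1)|
          + 1 / (β + 2) * |t₁ ^ (β + 2) - t₂ ^ (β + 2)| := by
          rw [abs_mul, abs_mul, abs_of_pos (by positivity : (0:ℝ) < R / (β + 1)),
            abs_of_pos (by positivity : (0:ℝ) < 1 / (β + 2))]
      _ ≤ R / (β + 1) * D + 1 / (β + 2) * (2 * R * D) := by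
          apply add_le_add
          · exact mul_le_mul_of_nonneg_left hD1 (by positivity)
          · exact mul_le_mul_of_nonneg_left hD2 (by positivity)
      _ = M * D := by rw [hMdef]; ring
  -- conclude
  refine ⟨(A * M) ^ (1 / (1 + γ)), fun r₁ hr₁ r₂ hr₂ => ?_⟩
  have hg₁ := hgnn r₁ hr₁
  have hg₂ := hgnn r₂ hr₂
  have hu₁ : u r₁ = (A * g r₁) ^ (1 / (1 + γ)) := hu r₁
  have hu₂ : u r₂ = (A * g r₂) ^ (1 / (1 + γ)) := hu r₂
  rw [hu₁, hu₂]
  have step1 : |(A * g r₁) ^ (1 / (1 + γ)) - (A * g r₂) ^ (1 / (1 + γ))|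
      ≤ |A * g r₁ - A * g r₂| ^ (1 / (1 + γ)) :=
    my_abs_rpow_sub_le (mul_nonneg hA.le hg₁) (mul_nonneg hA.le hg₂) hq0.le hq1
  have step2 : |A * g r₁ - A * g r₂| = A * |g r₁ - g r₂| := by
    rw [← mul_sub, abs_mul, abs_of_pos hA]
  have step3 : A * |g r₁ - g r₂| ≤ A * M * |r₁ - r₂| ^ (β + 1) := by
    rw [mul_assoc]
    exact mul_le_mul_of_nonneg_left (hg r₁ hr₁ r₂ hr₂) hA.le
  calc |(A * g r₁) ^ (1 / (1 + γ)) - (A * g r₂) ^ (1 / (1 + γ))|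
      ≤ |A * g r₁ - A * g r₂| ^ (1 / (1 + γ)) := step1
    _ ≤ (A * M * |r₁ - r₂| ^ (β + 1)) ^ (1 / (1 + γ)) := by
        apply Real.rpow_le_rpow (abs_nonneg _) _ hq0.le
        rw [step2]; exact step3
    _ = (A * M) ^ (1 / (1 + γ)) * (|r₁ - r₂| ^ (β + 1)) ^ (1 / (1 + γ)) :=
        Real.mul_rpow (by positivity) (Real.rpow_nonneg (abs_nonneg _) _)
    _ = (A * M) ^ (1 / (1 + γ)) * |r₁ - r₂| ^ ((β + 1) / (γ + 1)) := by
        rw [← Real.rpow_mul (abs_nonneg _), mul_one_div, add_comm 1 γ]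
end

section
/- Let γ>0, k≥1, ρ∈(0,1), and w(r) = ((1+γ)/k · (r - ρ + log((1-r)/(1-ρ))))^{1/(1+γ)}. Then w''(r) ≤ w'(r)/r for all r∈(0,ρ). -/
open Real Set Filter

theorem stmt7 (γ ρ : ℝ) (k : ℕ) (hγ : 0 < γ) (hk : 1 ≤ k) (hρ : ρ ∈ Set.Ioo (0 : ℝ) 1)
    (w : ℝ → ℝ)
    (hw : ∀ r, w r =
      ((1 + γ) / k * (r - ρ + Real.log ((1 - r) / (1 - ρ)))) ^ (1 / (1 + γ))) :
    ∀ r ∈ Set.Ioo (0 : ℝ) ρ, deriv (deriv w) r ≤ deriv w r / r := by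
  obtain ⟨hρ0, hρ1⟩ := hρ
  have hk0 : (0:ℝ) < k := by exact_mod_cast Nat.lt_of_lt_of_le Nat.zero_lt_one hk
  set c : ℝ := (1 + γ) / k with hc
  have hc0 : 0 < c := div_pos (by linarith) hk0
  set α : ℝ := 1 / (1 + γ) with hα
  have hα0 : 0 < α := by rw [hα]; positivity
  have hα1 : α < 1 := by rw [hα, div_lt_one (by linarith)]; linarith
  have hwf : w = fun t => (c * (t - ρ + Real.log ((1 - t) / (1 - ρ)))) ^ α := funext hw
  subst hwf
  have h1ρ : (0:ℝ) < 1 - ρ := by linarith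
  -- positivity of the argument
  have hgpos : ∀ s ∈ Ioo (0:ℝ) ρ, 0 < s - ρ + Real.log ((1 - s) / (1 - ρ)) := by
    intro s hs
    obtain ⟨hs0, hsρ⟩ := hs
    have h1s : (0:ℝ) < 1 - s := by linarith
    have hu : ρ - s < Real.log ((1 - s) / (1 - ρ)) := by
      rw [Real.lt_log_iff_exp_lt (by positivity)]
      rw [lt_div_iff₀ h1ρ]
      have h1 : 1 - (ρ - s) < Real.exp (-(ρ - s)) := by
        have := Real.add_one_lt_exp (x := -(ρ - s)) (by intro h; nlinarith)
        linarith
      have h2 : 0 < Real.exp (ρ - s) := Real.exp_pos _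
      have h3 : Real.exp (-(ρ-s)) * Real.exp (ρ-s) = 1 := by
        rw [← Real.exp_add]; simp
      -- exp(ρ-s) * (1 - (ρ-s)) < 1
      have h4 : Real.exp (ρ - s) * (1 - (ρ - s)) < 1 := by nlinarith
      nlinarith
    linarith
  -- derivative of g
  have hgd : ∀ s, s < 1 → HasDerivAt (fun t => t - ρ + Real.log ((1 - t) / (1 - ρ)))
      (-s / (1 - s)) s := by
    intro s hs1
    have h1s : (0:ℝ) < 1 - s := by linarith
    have hlin : HasDerivAt (fun t : ℝ => (1 - t) / (1 - ρ)) (-1 / (1 - ρ)) s := by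
      have := ((hasDerivAt_id s).const_sub 1).div_const (1 - ρ)
      simpa using this
    have hlog := hlin.log (by positivity)
    have hid : HasDerivAt (fun t : ℝ => t - ρ) 1 s := (hasDerivAt_id s).sub_const ρ
    have := hid.add hlog
    refine this.congr_deriv ?_
    field_simp
    ring
  intro r hr
  obtain ⟨hr0, hrρ⟩ := hr
  have h1r : (0:ℝ) < 1 - r := by linarith
  set F : ℝ → ℝ := fun s =>
    c * (-s / (1 - s)) * α * (c * (s - ρ + Real.log ((1 - s) / (1 - ρ)))) ^ (α - 1) with hF
  -- first derivative
  have hwd : ∀ s ∈ Ioo (0:ℝ) ρ,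
      HasDerivAt (fun t => (c * (t - ρ + Real.log ((1 - t) / (1 - ρ)))) ^ α) (F s) s := by
    intro s hs
    have hne : c * (s - ρ + Real.log ((1 - s) / (1 - ρ))) ≠ 0 :=
      ne_of_gt (mul_pos hc0 (hgpos s hs))
    have := ((hgd s (by linarith [hs.2])).const_mul c).rpow_const (p := α) (Or.inl hne)
    convert this using 1
  have hev : deriv (fun t => (c * (t - ρ + Real.log ((1 - t) / (1 - ρ)))) ^ α) =ᶠ[nhds r] F := by
    filter_upwards [isOpen_Ioo.mem_nhds (show r ∈ Ioo (0:ℝ) ρ from ⟨hr0, hrρ⟩)] with s hs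
    exact (hwd s hs).deriv
  set G : ℝ := r - ρ + Real.log ((1 - r) / (1 - ρ)) with hG
  have hGpos : 0 < G := hgpos r ⟨hr0, hrρ⟩
  set X : ℝ := (c * G) ^ (α - 1) with hX
  set Y : ℝ := (c * G) ^ (α - 1 - 1) with hY
  have hXpos : 0 < X := Real.rpow_pos_of_pos (mul_pos hc0 hGpos) _
  have hYpos : 0 < Y := Real.rpow_pos_of_pos (mul_pos hc0 hGpos) _
  -- second derivative
  have hFd : HasDerivAt F (c * α * (-X / (1 - r) ^ 2 + c * (α - 1) * r ^ 2 * Y / (1 - r) ^ 2)) r := by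
    have hne : c * G ≠ 0 := ne_of_gt (mul_pos hc0 hGpos)
    have hu : HasDerivAt (fun s : ℝ => c * (-s / (1 - s)) * α)
        (c * (-1 / (1 - r) ^ 2) * α) r := by
      have hdiv : HasDerivAt (fun s : ℝ => -s / (1 - s)) (-1 / (1 - r) ^ 2) r := by
        have hnum : HasDerivAt (fun s : ℝ => -s) (-1) r := (hasDerivAt_id r).neg
        have hden : HasDerivAt (fun s : ℝ => 1 - s) (-1) r := (hasDerivAt_id r).const_sub 1
        have := hnum.div hden (ne_of_gt h1r)
        refine this.congr_deriv ?_
        field_simp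
        ring
      exact (hdiv.const_mul c).mul_const α
    have hv : HasDerivAt (fun s : ℝ => (c * (s - ρ + Real.log ((1 - s) / (1 - ρ)))) ^ (α - 1))
        ((c * (-r / (1 - r))) * (α - 1) * Y) r := by
      have := (((hgd r (by linarith)).const_mul c).rpow_const (p := α - 1) (Or.inl hne))
      convert this using 2
    have := hu.mul hv
    refine this.congr_deriv ?_
    rw [hX, hY]
    field_simp
    ring
  have e1 : deriv (deriv (fun t => (c * (t - ρ + Real.log ((1 - t) / (1 - ρ)))) ^ α)) r
      = c * α * (-X / (1 - r) ^ 2 + c * (α - 1) * r ^ 2 * Y / (1 - r) ^ 2) := by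
    rw [hev.deriv_eq]
    exact hFd.deriv
  have e2 : deriv (fun t => (c * (t - ρ + Real.log ((1 - t) / (1 - ρ)))) ^ α) r = F r :=
    (hwd r ⟨hr0, hrρ⟩).deriv
  rw [e1, e2]
  have e3 : F r / r = c * α * (-X / (1 - r)) := by
    rw [hF]
    field_simp
    ring
  rw [e3]
  apply mul_le_mul_of_nonneg_left _ (by positivity)
  rw [← add_div, div_le_div_iff₀ (by positivity) h1r]
  nlinarith [mul_pos hXpos hr0, mul_pos (mul_pos hc0 (mul_pos (mul_pos hr0 hr0) hYpos)) h1r,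
    mul_nonneg (mul_nonneg hc0.le (mul_nonneg (mul_nonneg hr0.le hr0.le) hYpos.le)) h1r.le,
    mul_nonneg (mul_nonneg hXpos.le hr0.le) h1r.le]
end

section
/- Let γ>0, b>0, k≥1, ε>0 with ε < k/b, and define u_ε(r) = ((1+γ)/b · (r - k/b + ε + (k/b)·log((k-br)/(εb))))^{1/(1+γ)} for r∈[0, k/b - ε]. Then u_ε solves k·u'(r)/r - b·u'(r) + u(r)^{-γ} = 0 on (0, k/b - ε) with u_ε'(0)=0 and u_ε(k/b - ε)=0. -/
theorem stmt8 (γ b ε : ℝ) (k : ℕ) (hγ : 0 < γ) (hb : 0 < b) (hk : 1 ≤ k)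
    (hε : 0 < ε) (hεk : ε < k / b)
    (u : ℝ → ℝ)
    (hu : ∀ r, u r =
      ((1 + γ) / b * (r - k / b + ε + k / b * Real.log ((k - b * r) / (ε * b)))) ^ (1 / (1 + γ))) :
    (∀ r ∈ Set.Ioo (0 : ℝ) (k / b - ε),
        (k : ℝ) * deriv u r / r - b * deriv u r + (u r) ^ (-γ) = 0) ∧
      deriv u 0 = 0 ∧ u (k / b - ε) = 0 := by
  have hγ1 : (0:ℝ) < 1 + γ := by linarith
  have hεb : 0 < ε * b := mul_pos hε hb
  have hεbk : ε * b < k := (lt_div_iff₀ hb).mp hεk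
  set A : ℝ → ℝ := fun r => (1 + γ) / b * (r - k / b + ε + k / b * Real.log ((k - b * r) / (ε * b))) with hA
  have hu' : u = fun r => (A r) ^ (1/(1+γ)) := funext hu
  have hkb : (k:ℝ)/b * b = k := div_mul_cancel₀ _ hb.ne'
  have hkbr : ∀ r : ℝ, r < k/b - ε → ε * b < k - b * r := by
    intro r hr
    nlinarith [mul_lt_mul_of_pos_right hr hb]
  have hApos : ∀ r : ℝ, 0 ≤ r → r < k/b - ε → 0 < A r := by
    intro r hr0 hr1
    have ha : ε * b < k - b * r := hkbr r hr1
    have ha0 : 0 < k - b * r := lt_trans hεb ha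
    have hlog : Real.log ((ε*b)/(k - b*r)) < (ε*b)/(k - b*r) - 1 :=
      Real.log_lt_sub_one_of_pos (div_pos hεb ha0) (by
        intro h
        have := (div_eq_one_iff_eq ha0.ne').mp h
        linarith)
    have hLdef : Real.log (((k:ℝ) - b*r)/(ε*b)) = - Real.log ((ε*b)/((k:ℝ) - b*r)) := by
      rw [← Real.log_inv, inv_div]
    have hmul : ((k:ℝ) - b*r) * Real.log ((ε*b)/(k - b*r)) < (ε*b) - (k - b*r) := by
      have := mul_lt_mul_of_pos_left hlog ha0
      have hdiv : ((k:ℝ) - b*r) * ((ε*b)/(k - b*r)) = ε*b := mul_div_cancel₀ _ ha0.ne'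
      nlinarith
    have haL : ((k:ℝ) - b*r) - ε*b < ((k:ℝ) - b*r) * Real.log (((k:ℝ) - b*r)/(ε*b)) := by
      rw [hLdef]; nlinarith
    have hL0 : 0 < Real.log (((k:ℝ) - b*r)/(ε*b)) := by nlinarith
    have hbr0 : 0 ≤ b * r := mul_nonneg hb.le hr0
    have hkL : ((k:ℝ) - b*r) - ε*b < (k:ℝ) * Real.log (((k:ℝ) - b*r)/(ε*b)) := by
      nlinarith [mul_nonneg hbr0 hL0.le]
    have hbracket : 0 < r - k/b + ε + k/b * Real.log (((k:ℝ) - b*r)/(ε*b)) := by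
      have h1 : b * (r - k/b + ε + k/b * Real.log (((k:ℝ) - b*r)/(ε*b)))
          = b*r - k + ε*b + k * Real.log (((k:ℝ) - b*r)/(ε*b)) := by
        field_simp
      nlinarith
    have : 0 < (1+γ)/b := div_pos hγ1 hb
    exact mul_pos this hbracket
  have hderiv : ∀ r : ℝ, 0 ≤ r → r < k/b - ε →
      HasDerivAt u ((A r) ^ (1/(1+γ) - 1) * (-(r / (k - b*r)))) r := by
    intro r hr0 hr1
    have ha0 : 0 < (k:ℝ) - b * r := lt_trans hεb (hkbr r hr1)
    have hArg : 0 < ((k:ℝ) - b*r)/(ε*b) := div_pos ha0 hεb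
    have hA1 : HasDerivAt (fun x : ℝ => (k:ℝ) - b*x) (-b) r := by
      simpa using ((hasDerivAt_id r).const_mul b).const_sub (k:ℝ)
    have hlog : HasDerivAt (fun x : ℝ => Real.log (((k:ℝ) - b*x)/(ε*b)))
        ((-b/(ε*b)) / (((k:ℝ) - b*r)/(ε*b))) r :=
      (hA1.div_const (ε*b)).log hArg.ne'
    have hAd : HasDerivAt A ((1+γ)/b * (1 + k/b * ((-b/(ε*b)) / (((k:ℝ) - b*r)/(ε*b))))) r := by
      have h1 : HasDerivAt (fun x : ℝ => x - k/b + ε + k/b * Real.log (((k:ℝ) - b*x)/(ε*b)))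
          (1 + k/b * ((-b/(ε*b)) / (((k:ℝ) - b*r)/(ε*b)))) r := by
        exact (((hasDerivAt_id r).sub_const ((k:ℝ)/b)).add_const ε).add (hlog.const_mul ((k:ℝ)/b))
      exact h1.const_mul _
    have key := hAd.rpow_const (p := 1/(1+γ)) (Or.inl (hApos r hr0 hr1).ne')
    rw [hu']
    convert key using 1
    have hscal : ((1+γ)/b * (1 + k/b * ((-b/(ε*b)) / (((k:ℝ) - b*r)/(ε*b))))) * (1/(1+γ))
        = -(r / ((k:ℝ) - b*r)) := by
      field_simp
      ring
    rw [hscal]; ring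
  have hε' : (0:ℝ) < k/b - ε := by linarith
  refine ⟨?_, ?_, ?_⟩
  · rintro r ⟨hr0, hr1⟩
    have hd := (hderiv r hr0.le hr1).deriv
    have ha0 : 0 < (k:ℝ) - b * r := lt_trans hεb (hkbr r hr1)
    have hApos' := hApos r hr0.le hr1
    have hupow : (u r) ^ (-γ) = (A r) ^ (1/(1+γ) - 1) := by
      rw [hu']
      rw [← Real.rpow_mul hApos'.le]
      congr 1
      field_simp
      ring
    rw [hd, hupow]
    have hne : (k:ℝ) - r * b ≠ 0 := by nlinarith
    field_simp
    ring
  · have h0 := (hderiv 0 le_rfl hε').deriv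
    simpa using h0
  · rw [hu]
    have h1 : (k:ℝ) - b * (k/b - ε) = ε * b := by
      field_simp; ring
    rw [h1, div_self hεb.ne', Real.log_one]
    have h2 : (k:ℝ)/b - ε - k/b + ε + k/b * 0 = 0 := by ring
    rw [h2, mul_zero]
    exact Real.zero_rpow (by positivity)
end

section
/- With u_ε(r) = ((1+γ)/b·(r - k/b + ε + (k/b)·log((k-br)/(εb))))^{1/(1+γ)} as above, one has u_ε'(r) = -(r/(k-br))·u_ε(r)^{-γ} ≤ 0 and u_ε''(r) ≤ u_ε'(r)/r for all r∈(0, k/b - ε). -/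
theorem stmt9 (γ b ε : ℝ) (k : ℕ) (hγ : 0 < γ) (hb : 0 < b) (hk : 1 ≤ k)
    (hε : 0 < ε) (hεk : ε < k / b)
    (u : ℝ → ℝ)
    (hu : ∀ r, u r =
      ((1 + γ) / b * (r - k / b + ε + k / b * Real.log ((k - b * r) / (ε * b)))) ^ (1 / (1 + γ))) :
    ∀ r ∈ Set.Ioo (0 : ℝ) (k / b - ε),
      (deriv u r = -(r / (k - b * r)) * (u r) ^ (-γ) ∧ deriv u r ≤ 0) ∧
        deriv (deriv u) r ≤ deriv u r / r := by
  have hγ1 : (0:ℝ) < 1 + γ := by linarith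
  set c : ℝ := 1 / (1 + γ) with hc
  set f : ℝ → ℝ := fun s => (1 + γ) / b * (s - k / b + ε + k / b * Real.log ((k - b * s) / (ε * b))) with hfdef
  have hεb : 0 < ε * b := by positivity
  have hkb : (0:ℝ) < k := by exact_mod_cast Nat.lt_of_lt_of_le Nat.zero_lt_one hk
  -- basic location facts
  have hmem : ∀ r ∈ Set.Ioo (0:ℝ) (k/b - ε), 0 < r ∧ ε * b < k - b * r := by
    intro r hr
    obtain ⟨hr0, hr1⟩ := hr
    refine ⟨hr0, ?_⟩
    have h2 : b * r < b * (k/b - ε) := mul_lt_mul_of_pos_left hr1 hb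
    rw [mul_sub, mul_div_cancel₀ _ hb.ne'] at h2
    linarith
  -- positivity of f on the interval
  have hfpos : ∀ r ∈ Set.Ioo (0:ℝ) (k/b - ε), 0 < f r := by
    intro r hr
    obtain ⟨hr0, hkr⟩ := hmem r hr
    have hd : (0:ℝ) < k - b * r := lt_trans hεb hkr
    have hx0 : (0:ℝ) < (k - b*r)/(ε*b) := div_pos hd hεb
    have hlog : 1 - ((k - b*r)/(ε*b))⁻¹ ≤ Real.log ((k - b*r)/(ε*b)) := by
      have h := Real.log_le_sub_one_of_pos (inv_pos.mpr hx0)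
      rw [Real.log_inv] at h
      linarith
    have hxinv : ((k - b*r)/(ε*b))⁻¹ = ε*b/(k - b*r) := inv_div _ _
    apply mul_pos (by positivity)
    have step : k/b * (1 - ε*b/(k - b*r)) ≤ k/b * Real.log ((k - b*r)/(ε*b)) := by
      apply mul_le_mul_of_nonneg_left _ (by positivity)
      rw [← hxinv]; exact hlog
    have key : 0 < r - k/b + ε + k/b * (1 - ε*b/(k - b*r)) := by
      have e : r - k/b + ε + (k:ℝ)/b * (1 - ε*b/(k - b*r)) = r*((k:ℝ) - b*r - ε*b)/(k - b*r) := by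
        rw [eq_div_iff hd.ne']
        linear_combination (-((k:ℝ)/b)) * div_mul_cancel₀ (ε*b) hd.ne' - ε * div_mul_cancel₀ (k:ℝ) hb.ne'
      rw [e]
      exact div_pos (mul_pos hr0 (by linarith)) hd
    linarith
  -- derivative of f
  have hfd : ∀ r ∈ Set.Ioo (0:ℝ) (k/b - ε),
      HasDerivAt f (-(1+γ) * (r / (k - b * r))) r := by
    intro r hr
    obtain ⟨hr0, hkr⟩ := hmem r hr
    have hd : (0:ℝ) < k - b * r := lt_trans hεb hkr
    have h0 : HasDerivAt (fun s : ℝ => (k:ℝ) - b * s) (-b) r := by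
      simpa using ((hasDerivAt_id r).const_mul b).const_sub (k:ℝ)
    have h1 : HasDerivAt (fun s : ℝ => ((k:ℝ) - b * s)/(ε*b)) (-b/(ε*b)) r := h0.div_const _
    have hx0 : ((k:ℝ) - b*r)/(ε*b) ≠ 0 := (div_pos hd hεb).ne'
    have h2 := h1.log hx0
    have h3 : HasDerivAt (fun s : ℝ => s - (k:ℝ)/b + ε + k/b * Real.log (((k:ℝ) - b*s)/(ε*b)))
        (1 + (k:ℝ)/b * (-b/(ε*b) / (((k:ℝ) - b*r)/(ε*b)))) r := by
      exact (((hasDerivAt_id r).sub_const ((k:ℝ)/b)).add_const ε).add (h2.const_mul ((k:ℝ)/b))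
    have h4 := h3.const_mul ((1+γ)/b)
    have hval : (1+γ)/b * (1 + (k:ℝ)/b * (-b/(ε*b) / (((k:ℝ) - b*r)/(ε*b)))) = -(1+γ) * (r / (k - b * r)) := by
      field_simp
      ring
    rw [hval] at h4
    exact h4
  -- derivative of u
  have hud : ∀ r ∈ Set.Ioo (0:ℝ) (k/b - ε),
      HasDerivAt u (-(r / (k - b * r)) * f r ^ (c - 1)) r := by
    intro r hr
    have hfr := hfpos r hr
    have h := (hfd r hr).rpow_const (p := c) (Or.inl hfr.ne')
    have hueq : u = fun s => f s ^ c := by funext s; exact hu s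
    rw [hueq]
    have h1c : (1+γ) * c = 1 := by rw [hc]; field_simp
    have hval : -(1+γ) * (r / (k - b * r)) * c * f r ^ (c - 1)
        = -(r / (k - b * r)) * f r ^ (c - 1) := by
      have : -(1+γ) * (r / (k - b * r)) * c * f r ^ (c - 1)
          = -((1+γ)*c) * (r / (k - b * r)) * f r ^ (c - 1) := by ring
      rw [this, h1c]; ring
    rw [← hval]
    exact h
  intro r hr
  obtain ⟨hr0, hkr⟩ := hmem r hr
  have hd : (0:ℝ) < k - b * r := lt_trans hεb hkr
  have hfr := hfpos r hr
  have hu' := hud r hr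
  have hDeriv : deriv u r = -(r / (k - b * r)) * f r ^ (c - 1) := hu'.deriv
  have hF1 : 0 < f r ^ (c - 1) := Real.rpow_pos_of_pos hfr _
  have hur : u r = f r ^ c := hu r
  constructor
  · constructor
    · have hce : c - 1 = c * -γ := by rw [hc]; field_simp; ring
      rw [hDeriv, hur, ← Real.rpow_mul hfr.le, ← hce]
    · rw [hDeriv]
      have := mul_pos (div_pos hr0 hd) hF1
      linarith
  · -- second derivative
    set v : ℝ → ℝ := fun s => -(s / (k - b * s)) * f s ^ (c - 1) with hvdef
    have hEv : deriv u =ᶠ[nhds r] v := by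
      filter_upwards [isOpen_Ioo.mem_nhds hr] with s hs
      exact (hud s hs).deriv
    have h0 : HasDerivAt (fun s : ℝ => (k:ℝ) - b * s) (-b) r := by
      simpa using ((hasDerivAt_id r).const_mul b).const_sub (k:ℝ)
    have hA : HasDerivAt (fun s : ℝ => s / ((k:ℝ) - b * s))
        ((1 * ((k:ℝ) - b * r) - r * (-b)) / ((k:ℝ) - b * r)^2) r :=
      (hasDerivAt_id r).div h0 hd.ne'
    have hB := (hfd r hr).rpow_const (p := c - 1) (Or.inl hfr.ne')
    have hv : HasDerivAt v
        (-((1 * ((k:ℝ) - b * r) - r * (-b)) / ((k:ℝ) - b * r)^2) * f r ^ (c - 1)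
          + -(r / ((k:ℝ) - b * r)) * (-(1+γ) * (r / (k - b * r)) * (c - 1) * f r ^ (c - 1 - 1))) r :=
      hA.neg.mul hB
    rw [hEv.deriv_eq, hv.deriv, hDeriv]
    have hF2 : 0 < f r ^ (c - 1 - 1) := Real.rpow_pos_of_pos hfr _
    have hc1 : (1+γ) * (c - 1) = -γ := by rw [hc]; field_simp; ring
    have e1 : -((1 * ((k:ℝ) - b * r) - r * (-b)) / ((k:ℝ) - b * r)^2) * f r ^ (c - 1)
          + -(r / ((k:ℝ) - b * r)) * (-(1+γ) * (r / (k - b * r)) * (c - 1) * f r ^ (c - 1 - 1))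
        = -((k:ℝ)/((k:ℝ) - b * r)^2) * f r ^ (c - 1)
          + ((1+γ)*(c-1)) * (r/((k:ℝ) - b * r))^2 * f r ^ (c - 1 - 1) := by
      field_simp
      ring
    rw [e1, hc1]
    have e2 : -(r / ((k:ℝ) - b * r)) * f r ^ (c - 1) / r = -(1/((k:ℝ) - b * r)) * f r ^ (c - 1) := by
      field_simp
    rw [e2]
    have t1 : -γ * (r/((k:ℝ) - b * r))^2 * f r ^ (c - 1 - 1) ≤ 0 := by
      have : 0 ≤ γ * (r/((k:ℝ) - b * r))^2 * f r ^ (c - 1 - 1) := by positivity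
      linarith
    have t2 : -((k:ℝ)/((k:ℝ) - b * r)^2) * f r ^ (c - 1) ≤ -(1/((k:ℝ) - b * r)) * f r ^ (c - 1) := by
      have h1 : 1/((k:ℝ) - b * r) ≤ (k:ℝ)/((k:ℝ) - b * r)^2 := by
        rw [div_le_div_iff₀ hd (by positivity)]
        nlinarith [mul_pos hd (mul_pos hb hr0)]
      nlinarith [mul_le_mul_of_nonneg_right h1 hF1.le]
    linarith
end

section
/- Let k≥1, b>0, R>0, γ>0, β≤-1 with bR≤k, and for ρ∈(0,R) define w(r) = ((1+γ)·∫_r^ρ s(R-s)^β/(k+bs) ds)^{1/(1+γ)}. Then w solves k·w'(r)/r + b·w'(r) + (R-r)^β·w(r)^{-γ} = 0 on (0,ρ) with w(ρ)=0. -/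
theorem stmt12 (b R γ β ρ : ℝ) (k : ℕ) (hk : 1 ≤ k) (hb : 0 < b) (hR : 0 < R)
    (hγ : 0 < γ) (hβ : β ≤ -1) (hbR : b * R ≤ k) (hρ : ρ ∈ Set.Ioo (0 : ℝ) R)
    (w : ℝ → ℝ)
    (hw : ∀ r, w r =
      ((1 + γ) * ∫ s in r..ρ, s * (R - s) ^ β / (k + b * s)) ^ (1 / (1 + γ))) :
    (∀ r ∈ Set.Ioo (0 : ℝ) ρ,
        (k : ℝ) * deriv w r / r + b * deriv w r + (R - r) ^ β * (w r) ^ (-γ) = 0) ∧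
      w ρ = 0 := by
  obtain ⟨hρ0, hρR⟩ := hρ
  have hγ1 : (0:ℝ) < 1 + γ := by linarith
  have hk1 : (1:ℝ) ≤ (k:ℝ) := by exact_mod_cast hk
  set g : ℝ → ℝ := fun s => s * (R - s) ^ β / (k + b * s) with hg
  have hgcont : ∀ s ∈ Set.Ioo (0:ℝ) R, ContinuousAt g s := by
    intro s hs
    have h1 : ContinuousAt (fun u : ℝ => (R - u) ^ β) s := by
      have hb1 : R - s ≠ 0 := by have := hs.2; intro h; linarith [sub_eq_zero.mp h]
      exact (Real.continuousAt_rpow_const _ _ (Or.inl hb1)).comp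
        ((continuous_const.sub continuous_id).continuousAt)
    have hden : (k:ℝ) + b * s ≠ 0 := by nlinarith [hs.1]
    exact (continuousAt_id.mul h1).div
      (continuous_const.add (continuous_const.mul continuous_id)).continuousAt hden
  constructor
  · rintro r ⟨hr0, hrρ⟩
    have hrR : r < R := lt_trans hrρ hρR
    -- interval integrability
    have hsub : Set.uIcc r ρ ⊆ Set.Ioo (0:ℝ) R := by
      rw [Set.uIcc_of_le hrρ.le]
      intro x hx
      exact ⟨lt_of_lt_of_le hr0 hx.1, lt_of_le_of_lt hx.2 hρR⟩
    have hint : IntervalIntegrable g MeasureTheory.volume r ρ :=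
      (ContinuousOn.intervalIntegrable (fun x hx => (hgcont x (hsub hx)).continuousWithinAt))
    -- positivity of the integral
    have hgpos : ∀ x ∈ Set.Ioo r ρ, 0 < g x := by
      intro x hx
      have hx0 : 0 < x := lt_trans hr0 hx.1
      have hxR : x < R := lt_trans hx.2 hρR
      have : (0:ℝ) < (R - x) ^ β := Real.rpow_pos_of_pos (by linarith) _
      have hden : (0:ℝ) < (k:ℝ) + b * x := by nlinarith
      exact div_pos (mul_pos hx0 this) hden
    have hF : 0 < ∫ s in r..ρ, g s :=
      intervalIntegral.intervalIntegral_pos_of_pos_on hint hgpos hrρ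
    set F : ℝ := ∫ s in r..ρ, g s with hFdef
    have hx : 0 < (1 + γ) * F := mul_pos hγ1 hF
    -- derivative of the integral
    have hmeas : StronglyMeasurableAtFilter g (nhds r) MeasureTheory.volume :=
      ContinuousAt.stronglyMeasurableAtFilter isOpen_Ioo hgcont r ⟨hr0, hrR⟩
    have hderivI : HasDerivAt (fun u => ∫ s in u..ρ, g s) (-(g r)) r :=
      intervalIntegral.integral_hasDerivAt_left hint hmeas (hgcont r ⟨hr0, hrR⟩)
    have hderiv2 : HasDerivAt (fun u => (1 + γ) * ∫ s in u..ρ, g s)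
        ((1 + γ) * -(g r)) r := hderivI.const_mul _
    have hrpow : HasDerivAt (fun y : ℝ => y ^ (1 / (1 + γ)))
        (1 / (1 + γ) * ((1 + γ) * F) ^ (1 / (1 + γ) - 1)) ((1 + γ) * F) :=
      Real.hasDerivAt_rpow_const (Or.inl hx.ne')
    have hw' : HasDerivAt w
        (1 / (1 + γ) * ((1 + γ) * F) ^ (1 / (1 + γ) - 1) * ((1 + γ) * -(g r))) r := by
      have := hrpow.comp r hderiv2
      rw [show w = _ from funext hw]
      exact this
    have hdw : deriv w r = -(((1 + γ) * F) ^ (1 / (1 + γ) - 1) * g r) := by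
      rw [hw'.deriv]; field_simp
    -- rewrite w r ^ (-γ)
    have hwr : (w r) ^ (-γ) = ((1 + γ) * F) ^ (1 / (1 + γ) - 1) := by
      rw [hw r, ← hFdef, ← Real.rpow_mul hx.le]
      congr 1
      field_simp
      ring
    rw [hdw, hwr]
    set X : ℝ := ((1 + γ) * F) ^ (1 / (1 + γ) - 1)
    have hgr : g r = r * (R - r) ^ β / (k + b * r) := rfl
    have hden : (0:ℝ) < (k:ℝ) + b * r := by nlinarith
    rw [hgr]
    field_simp
    ring
  · rw [hw ρ, intervalIntegral.integral_same, mul_zero, Real.zero_rpow]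
    positivity
end

section
/- With w as in the previous statement (β≤-1, bR≤k), w''(r) ≤ w'(r)/r for all r∈(0,ρ). Moreover, for each fixed r∈[0,R), w(r)→∞ as ρ→R⁻ (since β≤-1 makes ∫^R s(R-s)^β/(k+bs) ds divergent). -/
open Filter Topology MeasureTheory

set_option maxHeartbeats 1000000 in
theorem stmt13 (b R γ β : ℝ) (k : ℕ) (hk : 1 ≤ k) (hb : 0 < b) (hR : 0 < R)
    (hγ : 0 < γ) (hβ : β ≤ -1) (hbR : b * R ≤ k)
    (w : ℝ → ℝ → ℝ)
    (hw : ∀ ρ r, w ρ r =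
      ((1 + γ) * ∫ s in r..ρ, s * (R - s) ^ β / (k + b * s)) ^ (1 / (1 + γ))) :
    (∀ ρ ∈ Set.Ioo (0 : ℝ) R, ∀ r ∈ Set.Ioo (0 : ℝ) ρ,
        deriv (deriv (w ρ)) r ≤ deriv (w ρ) r / r) ∧
      ∀ r ∈ Set.Ico (0 : ℝ) R, Tendsto (fun ρ => w ρ r) (𝓝[<] R) atTop := by
  have hγ1 : (0:ℝ) < 1 + γ := by linarith
  have hk1 : (1:ℝ) ≤ (k:ℝ) := by exact_mod_cast hk
  set f : ℝ → ℝ := fun s => s * (R - s) ^ β / (k + b * s) with hf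
  have hfc : ContinuousOn f (Set.Ico 0 R) := by
    apply ContinuousOn.div
    · exact continuousOn_id.mul ((continuousOn_const.sub continuousOn_id).rpow_const
        (fun x hx => Or.inl (by simpa using (sub_pos.mpr hx.2).ne')))
    · exact continuousOn_const.add (continuousOn_const.mul continuousOn_id)
    · intro x hx
      have : (0:ℝ) < k + b * x := by
        have := mul_nonneg hb.le hx.1
        linarith
      exact this.ne'
  have hInt : ∀ a c : ℝ, 0 ≤ a → c < R → a ≤ c → IntervalIntegrable f volume a c := by
    intro a c ha hc hac
    apply (hfc.mono ?_).intervalIntegrable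
    rw [Set.uIcc_of_le hac]
    intro x hx
    exact ⟨ha.trans hx.1, lt_of_le_of_lt hx.2 hc⟩
  have hfpos : ∀ x : ℝ, 0 < x → x < R → 0 < f x := by
    intro x hx hxR
    have h1 : 0 < R - x := by linarith
    have h2 : (0:ℝ) < k + b * x := by nlinarith
    have h3 : 0 < (R - x) ^ β := Real.rpow_pos_of_pos h1 β
    simp only [hf]
    positivity
  constructor
  · rintro ρ ⟨hρ0, hρR⟩ r ⟨hr0, hrρ⟩
    set p : ℝ := 1 / (1 + γ) with hp
    set g : ℝ → ℝ := fun x => (1 + γ) * ∫ s in x..ρ, f s with hg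
    have hU : IsOpen (Set.Ioo (0:ℝ) ρ) := isOpen_Ioo
    have hsub : Set.Ioo (0:ℝ) ρ ⊆ Set.Ico 0 R := fun x hx => ⟨hx.1.le, hx.2.trans hρR⟩
    have hr' : r ∈ Set.Ioo (0:ℝ) ρ := ⟨hr0, hrρ⟩
    have hgd : ∀ x ∈ Set.Ioo (0:ℝ) ρ, HasDerivAt g (-((1+γ) * f x)) x := by
      intro x hx
      have h1 : HasDerivAt (fun u => ∫ s in u..ρ, f s) (-f x) x :=
        intervalIntegral.integral_hasDerivAt_left (hInt x ρ hx.1.le hρR hx.2.le)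
          (ContinuousOn.stronglyMeasurableAtFilter hU (hfc.mono hsub) x hx)
          ((hfc.mono hsub).continuousAt (hU.mem_nhds hx))
      have := h1.const_mul (1 + γ)
      rw [show -((1+γ) * f x) = (1 + γ) * -f x by ring]
      exact this
    have hgpos : ∀ x ∈ Set.Ioo (0:ℝ) ρ, 0 < g x := by
      intro x hx
      apply mul_pos hγ1
      apply intervalIntegral.intervalIntegral_pos_of_pos_on (hInt x ρ hx.1.le hρR hx.2.le)
        (fun s hs => hfpos s (hx.1.trans hs.1) (hs.2.trans hρR)) hx.2
    have hpγ : (1 + γ) * p = 1 := by rw [hp]; field_simp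
    have hwd : ∀ x ∈ Set.Ioo (0:ℝ) ρ, HasDerivAt (w ρ) (-(f x * g x ^ (p - 1))) x := by
      intro x hx
      have hwfun : w ρ = fun y => g y ^ p := funext fun y => hw ρ y
      rw [hwfun]
      have := (hgd x hx).rpow_const (p := p) (Or.inl (hgpos x hx).ne')
      convert this using 1
      have hgx := (hgpos x hx).ne'
      linear_combination (f x * g x ^ (p - 1)) * hpγ
    have hev : deriv (w ρ) =ᶠ[𝓝 r] fun x => -(f x * g x ^ (p - 1)) := by
      filter_upwards [hU.mem_nhds hr'] with x hx using (hwd x hx).deriv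
    -- derivative of f at r
    have hRr : 0 < R - r := by linarith
    have hd0 : (0:ℝ) < k + b * r := by nlinarith
    have h0 : HasDerivAt (fun s : ℝ => R - s) (0 - 1) r := (hasDerivAt_const r R).sub (hasDerivAt_id r)
    have hA : HasDerivAt (fun s : ℝ => (R - s) ^ β) ((0 - 1) * β * (R - r) ^ (β - 1)) r :=
      h0.rpow_const (Or.inl hRr.ne')
    have hnum : HasDerivAt (fun s : ℝ => s * (R - s) ^ β)
        (1 * (R - r) ^ β + r * ((0 - 1) * β * (R - r) ^ (β - 1))) r :=
      (hasDerivAt_id r).mul hA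
    have hden : HasDerivAt (fun s : ℝ => (k:ℝ) + b * s) (0 + b * 1) r :=
      (hasDerivAt_const r ((k:ℝ))).add ((hasDerivAt_id r).const_mul b)
    set D : ℝ := ((1 * (R - r) ^ β + r * ((0 - 1) * β * (R - r) ^ (β - 1))) * ((k:ℝ) + b * r)
        - r * (R - r) ^ β * (0 + b * 1)) / ((k:ℝ) + b * r) ^ 2 with hDdef
    have hfd : HasDerivAt f D r := hnum.div hden hd0.ne'
    have hφ : HasDerivAt (fun x => -(f x * g x ^ (p - 1)))
        (-(D * g r ^ (p - 1) + f r * (-((1+γ) * f r) * (p - 1) * g r ^ (p - 1 - 1)))) r :=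
      (hfd.mul ((hgd r hr').rpow_const (Or.inl (hgpos r hr').ne'))).neg
    rw [hev.deriv_eq, hφ.deriv, (hwd r hr').deriv]
    -- now the inequality
    have hF : 0 < f r := hfpos r hr0 (by linarith)
    have hG : 0 < g r := hgpos r hr'
    have hG1 : 0 < g r ^ (p - 1) := Real.rpow_pos_of_pos hG _
    have hG2 : 0 < g r ^ (p - 1 - 1) := Real.rpow_pos_of_pos hG _
    have hA1 : 0 < (R - r) ^ (β - 1) := Real.rpow_pos_of_pos hRr _
    have hsplit : (R - r) ^ β = (R - r) ^ (β - 1) * (R - r) := by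
      rw [← Real.rpow_add_one hRr.ne' (β - 1)]
      norm_num
    have hγp : (1 + γ) * (p - 1) = -γ := by rw [hp]; field_simp; ring
    have hfr : f r = r * (R - r) ^ β / ((k:ℝ) + b * r) := rfl
    have hd2 : (0:ℝ) < ((k:ℝ) + b * r) ^ 2 := by positivity
    have hbound : b * (R - r) ≤ (-β) * ((k:ℝ) + b * r) := by
      nlinarith [mul_nonneg (by linarith : (0:ℝ) ≤ -β - 1) hd0.le]
    have step2 : f r / r ≤ D := by
      rw [hfr, hDdef, hsplit, div_div, div_le_div_iff₀ (by positivity) hd2]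
      nlinarith [mul_nonneg (mul_nonneg (mul_pos hd0 hA1).le (mul_pos hr0 hr0).le)
        (by linarith : (0:ℝ) ≤ (-β) * ((k:ℝ) + b * r) - b * (R - r))]
    have h1 : f r * (-((1+γ) * f r) * (p - 1) * g r ^ (p - 1 - 1)) = γ * f r ^ 2 * g r ^ (p - 1 - 1) := by
      linear_combination (-(f r ^ 2 * g r ^ (p - 1 - 1))) * hγp
    have h2 : f r / r * g r ^ (p - 1) ≤ D * g r ^ (p - 1) :=
      mul_le_mul_of_nonneg_right step2 hG1.le
    have h3 : 0 ≤ γ * f r ^ 2 * g r ^ (p - 1 - 1) := by positivity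
    have h4 : -(f r * g r ^ (p - 1)) / r = -(f r / r * g r ^ (p - 1)) := by ring
    rw [h1, h4]
    linarith
  · rintro r ⟨hr0, hrR⟩
    have houter : Tendsto (fun y : ℝ => ((1 + γ) * y) ^ (1 / (1 + γ))) atTop atTop :=
      (tendsto_rpow_atTop (by positivity)).comp (Tendsto.const_mul_atTop hγ1 tendsto_id)
    suffices hF : Tendsto (fun ρ => ∫ s in r..ρ, f s) (𝓝[<] R) atTop by
      have := houter.comp hF
      refine this.congr (fun ρ => ?_)
      simp only [Function.comp]
      rw [hw]
    set r1 : ℝ := max ((r + R) / 2) (R - 1) with hr1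
    have hr1R : r1 < R := max_lt (by linarith) (by linarith)
    have hrr1 : r ≤ r1 := le_trans (by linarith : r ≤ (r + R) / 2) (le_max_left _ _)
    have hr1pos : 0 < r1 := lt_of_lt_of_le (by linarith : (0:ℝ) < (r + R) / 2) (le_max_left _ _)
    have hRr1le : R - r1 ≤ 1 := by
      have := le_max_right ((r + R) / 2) (R - 1); linarith
    have hRr1pos : 0 < R - r1 := by linarith
    set c : ℝ := r1 / ((k:ℝ) + b * R) with hc
    have hkbR : (0:ℝ) < (k:ℝ) + b * R := by nlinarith
    have hcpos : 0 < c := div_pos hr1pos hkbR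
    have hlow : ∀ ρ ∈ Set.Ioo r1 R, c * (Real.log (R - r1) - Real.log (R - ρ)) ≤ ∫ s in r..ρ, f s := by
      intro ρ hρ
      have hint1 : IntervalIntegrable f volume r r1 := hInt r r1 hr0 hr1R hrr1
      have hint2 : IntervalIntegrable f volume r1 ρ := hInt r1 ρ hr1pos.le hρ.2 hρ.1.le
      have hsplitI : ∫ s in r..ρ, f s = (∫ s in r..r1, f s) + ∫ s in r1..ρ, f s :=
        (intervalIntegral.integral_add_adjacent_intervals hint1 hint2).symm
      have h1 : 0 ≤ ∫ s in r..r1, f s := by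
        apply intervalIntegral.integral_nonneg hrr1
        intro s hs
        have hsR : s < R := lt_of_le_of_lt hs.2 hr1R
        have h2 : (0:ℝ) < k + b * s := by nlinarith [hr0.trans hs.1]
        have h3 : (0:ℝ) < R - s := by linarith
        have h4 : 0 < (R - s) ^ β := Real.rpow_pos_of_pos h3 β
        simp only [hf]
        have hs0 : 0 ≤ s := hr0.trans hs.1
        positivity
      have hRρ : 0 < R - ρ := by linarith [hρ.2]
      have hg_cont : ContinuousOn (fun s : ℝ => c / (R - s)) (Set.Icc r1 ρ) := by
        apply ContinuousOn.div continuousOn_const (continuousOn_const.sub continuousOn_id)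
        intro s hs
        have : s < R := lt_of_le_of_lt hs.2 hρ.2
        simpa using (sub_pos.mpr this).ne'
      have hg_int : IntervalIntegrable (fun s : ℝ => c / (R - s)) volume r1 ρ := by
        apply ContinuousOn.intervalIntegrable
        rwa [Set.uIcc_of_le hρ.1.le]
      have hmono : (∫ s in r1..ρ, c / (R - s)) ≤ ∫ s in r1..ρ, f s := by
        apply intervalIntegral.integral_mono_on hρ.1.le hg_int hint2
        intro s hs
        have hs0 : 0 < s := lt_of_lt_of_le hr1pos hs.1
        have hsR : s < R := lt_of_le_of_lt hs.2 hρ.2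
        have hRs : 0 < R - s := by linarith
        have hRs1 : R - s ≤ 1 := by
          have : r1 ≤ s := hs.1
          linarith
        have h2 : (R - s)⁻¹ ≤ (R - s) ^ β := by
          have := Real.rpow_le_rpow_of_exponent_ge hRs hRs1 hβ
          rwa [Real.rpow_neg_one] at this
        have hds : (0:ℝ) < (k:ℝ) + b * s := by nlinarith
        have hdsR : (k:ℝ) + b * s ≤ (k:ℝ) + b * R := by nlinarith
        have hnum' : r1 * (R - s)⁻¹ ≤ s * (R - s) ^ β := by
          apply mul_le_mul hs.1 h2 (by positivity) hs0.le
        have heq : c / (R - s) = r1 * (R - s)⁻¹ / ((k:ℝ) + b * R) := by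
          rw [hc]
          field_simp
        rw [heq]
        simp only [hf]
        exact div_le_div₀ (by positivity) hnum' hds hdsR
      have hlog : (∫ s in r1..ρ, c / (R - s)) = c * (Real.log (R - r1) - Real.log (R - ρ)) := by
        have hder : ∀ s ∈ Set.uIcc r1 ρ, HasDerivAt (fun u : ℝ => -c * Real.log (R - u)) (c / (R - s)) s := by
          intro s hs
          rw [Set.uIcc_of_le hρ.1.le] at hs
          have hsR : s < R := lt_of_le_of_lt hs.2 hρ.2
          have hRs : (0:ℝ) < R - s := by linarith
          have h0' : HasDerivAt (fun u : ℝ => R - u) (0 - 1) s :=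
            (hasDerivAt_const s R).sub (hasDerivAt_id s)
          have hlog' : HasDerivAt (fun u : ℝ => Real.log (R - u)) ((R - s)⁻¹ * (0 - 1)) s :=
            (Real.hasDerivAt_log hRs.ne').comp s h0'
          have := hlog'.const_mul (-c)
          rw [show c / (R - s) = -c * ((R - s)⁻¹ * (0 - 1)) by ring]
          exact this
        rw [intervalIntegral.integral_eq_sub_of_hasDerivAt hder hg_int]
        ring
      linarith [hmono, hlog, h1, hsplitI.ge, hsplitI.le]
    have htends : Tendsto (fun ρ => c * (Real.log (R - r1) - Real.log (R - ρ))) (𝓝[<] R) atTop := by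
      apply Tendsto.const_mul_atTop hcpos
      have hsub2 : Tendsto (fun ρ : ℝ => R - ρ) (𝓝[<] R) (𝓝[>] 0) := by
        apply tendsto_nhdsWithin_of_tendsto_nhds_of_eventually_within
        · have : Tendsto (fun ρ : ℝ => R - ρ) (𝓝 R) (𝓝 0) := by
            have := (continuous_sub_left R).tendsto R
            simpa using this
          exact this.mono_left nhdsWithin_le_nhds
        · filter_upwards [self_mem_nhdsWithin] with x hx
          exact sub_pos.2 (Set.mem_Iio.mp hx)
      have hlogto : Tendsto (fun ρ : ℝ => Real.log (R - ρ)) (𝓝[<] R) atBot :=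
        Real.tendsto_log_nhdsGT_zero.comp hsub2
      have : Tendsto (fun ρ : ℝ => -Real.log (R - ρ)) (𝓝[<] R) atTop :=
        tendsto_neg_atBot_atTop.comp hlogto
      have := tendsto_atTop_add_const_left _ (Real.log (R - r1)) this
      exact this.congr (fun ρ => by ring)
    apply tendsto_atTop_mono' _ _ htends
    filter_upwards [Ioo_mem_nhdsLT_of_mem (⟨hr1R, le_refl R⟩ : R ∈ Set.Ioc r1 R)] with ρ hρ
    exact hlow ρ hρ
end
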